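/- arXiv:2510.02757 — 3 statements merged into one kernel-verified Lean document; each statement's English description precedes it below -/
import Mathlib

section
/- Let T > 0 and t ∈ [0,T). Let (F_s)_{s∈[0,T]} be a filtration on a probability space (Ω, 𝓕, P), let M : [0,T] → Ω → ℝ^d be an F-martingale with each M_s integrable, and let μ : [0,T] × Ω → ℝ^d be jointly measurable, uniformly bounded (|μ_s(ω)| ≤ C for all (s,ω)), and such that for P-a.e. ω the map s ↦ μ_s(ω) is continuous on [0,T]. Define X_s(ω) = x₀ + ∫₀^s μ_r(ω) dr + M_s(ω). Then for every sub-σ-algebra G ⊆ F_t, the drift estimator converges in L¹: E[ | (1/Δ) E[X_{t+Δ} − X_t | G] − E[μ_t | G] | ] → 0 as Δ → 0⁺ (Δ ranging over (0, T − t]). -/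
open MeasureTheory Filter Set Topology

/-- Conditional expectation commutes with a continuous linear map. -/
lemma condexp_clm_comm {α E F' : Type*} [NormedAddCommGroup E] [NormedSpace ℝ E]
    [CompleteSpace E] [NormedAddCommGroup F'] [NormedSpace ℝ F'] [CompleteSpace F']
    {m m0 : MeasurableSpace α} {μ : Measure α} [IsFiniteMeasure μ]
    (hm : m ≤ m0) (L : E →L[ℝ] F') {f : α → E} (hf : Integrable f μ) :
    (fun ω => L ((μ[f|m]) ω)) =ᵐ[μ] μ[fun ω => L (f ω)|m] := by
  haveI : SigmaFinite (μ.trim hm) := inferInstance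
  refine ae_eq_condExp_of_forall_setIntegral_eq hm (L.integrable_comp hf)
    (fun s _ _ => (L.integrable_comp integrable_condExp).integrableOn)
    (fun s hs hμs => ?_) ?_
  · rw [L.integral_comp_comm integrable_condExp.integrableOn,
      setIntegral_condExp hm hf hs, L.integral_comp_comm hf.integrableOn]
  · exact ((L.continuous.comp_stronglyMeasurable
      stronglyMeasurable_condExp)).aestronglyMeasurable

lemma euclid_norm_le_sum {d : ℕ} (v : EuclideanSpace ℝ (Fin d)) :
    ‖v‖ ≤ ∑ i, |v i| := by
  rw [EuclideanSpace.norm_eq]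
  have h1 : ∑ i, ‖v i‖ ^ 2 ≤ (∑ i, ‖v i‖) ^ 2 :=
    Finset.sum_sq_le_sq_sum_of_nonneg (fun i _ => norm_nonneg _)
  calc Real.sqrt (∑ i, ‖v i‖ ^ 2) ≤ Real.sqrt ((∑ i, ‖v i‖) ^ 2) := Real.sqrt_le_sqrt h1
    _ = ∑ i, ‖v i‖ := Real.sqrt_sq (Finset.sum_nonneg fun i _ => norm_nonneg _)
    _ = ∑ i, |v i| := by simp [Real.norm_eq_abs]

/-- L¹ contraction for conditional expectation on Euclidean space, up to a factor `d`. -/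
lemma integral_norm_condexp_le_dim {Ω : Type*} {m0 : MeasurableSpace Ω} {P : Measure Ω}
    [IsFiniteMeasure P] {d : ℕ} {G : MeasurableSpace Ω} (hG : G ≤ m0)
    {f : Ω → EuclideanSpace ℝ (Fin d)} (hf : Integrable f P) :
    ∫ ω, ‖(P[f|G]) ω‖ ∂P ≤ (d : ℝ) * ∫ ω, ‖f ω‖ ∂P := by
  have habs : ∀ (v : EuclideanSpace ℝ (Fin d)) (i : Fin d), |v i| ≤ ‖v‖ := by
    intro v i
    rw [EuclideanSpace.norm_eq, ← Real.sqrt_sq_eq_abs]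
    refine Real.sqrt_le_sqrt ?_
    have : |v i| ^ 2 ≤ ∑ j, ‖v j‖ ^ 2 := by
      refine Finset.single_le_sum (f := fun j => ‖v j‖ ^ 2)
        (fun j _ => by positivity) (Finset.mem_univ i) |>.trans_eq' ?_
      simp [Real.norm_eq_abs, sq_abs]
    simpa [sq_abs] using this
  have hint_i : ∀ i : Fin d, Integrable (fun ω => f ω i) P := fun i =>
    (EuclideanSpace.proj (𝕜 := ℝ) i).integrable_comp hf
  have hcint : ∀ i : Fin d, Integrable (fun ω => |(P[f|G]) ω i|) P := fun i => by
    have : Integrable (P[f|G]) P := integrable_condExp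
    exact ((EuclideanSpace.proj (𝕜 := ℝ) i).integrable_comp this).abs
  have h1 : ∫ ω, ‖(P[f|G]) ω‖ ∂P ≤ ∫ ω, ∑ i, |(P[f|G]) ω i| ∂P := by
    have : Integrable (P[f|G]) P := integrable_condExp
    exact integral_mono this.norm (integrable_finset_sum _ fun i _ => hcint i)
      (fun ω => euclid_norm_le_sum _)
  have h2 : ∫ ω, ∑ i, |(P[f|G]) ω i| ∂P = ∑ i, ∫ ω, |(P[f|G]) ω i| ∂P :=
    integral_finset_sum _ fun i _ => hcint i
  have h3 : ∀ i : Fin d, ∫ ω, |(P[f|G]) ω i| ∂P ≤ ∫ ω, ‖f ω‖ ∂P := by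
    intro i
    have hcomm : (fun ω => (P[f|G]) ω i) =ᵐ[P] P[fun ω => f ω i|G] :=
      condexp_clm_comm hG (EuclideanSpace.proj (𝕜 := ℝ) i) hf
    have heq : ∫ ω, |(P[f|G]) ω i| ∂P = ∫ ω, |(P[fun ω => f ω i|G]) ω| ∂P :=
      integral_congr_ae (hcomm.mono fun ω hω => by simp only at hω ⊢; rw [hω])
    rw [heq]
    refine (integral_abs_condExp_le _).trans ?_
    refine integral_mono (hint_i i).abs hf.norm fun ω => ?_
    exact habs (f ω) i
  calc ∫ ω, ‖(P[f|G]) ω‖ ∂P ≤ ∑ i, ∫ ω, |(P[f|G]) ω i| ∂P := h2 ▸ h1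
    _ ≤ ∑ _i : Fin d, ∫ ω, ‖f ω‖ ∂P := Finset.sum_le_sum fun i _ => h3 i
    _ = (d : ℝ) * ∫ ω, ‖f ω‖ ∂P := by simp [Finset.sum_const, nsmul_eq_mul]

/-- For an Itô-type process `X = x₀ + ∫ μ + M` with `M` an `F`-martingale and
`μ` jointly measurable, bounded, and a.s. time-continuous, for every sub-σ-algebra `G ⊆ F t`
the drift estimator converges in L¹:
`E[ | (1/Δ) E[X_{t+Δ} − X_t | G] − E[μ_t | G] | ] → 0` as `Δ → 0⁺`, `Δ ∈ (0, T − t]`. -/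
theorem statement1
    {Ω : Type*} {m0 : MeasurableSpace Ω} {P : Measure Ω} [IsProbabilityMeasure P]
    {d : ℕ} {T t : ℝ}
    (hT : 0 < T) (ht : t ∈ Ico (0 : ℝ) T)
    (F : Filtration ℝ m0)
    (M : ℝ → Ω → EuclideanSpace ℝ (Fin d))
    (hM_adapted : ∀ s ∈ Icc (0 : ℝ) T, StronglyMeasurable[F s] (M s))
    (hM_int : ∀ s ∈ Icc (0 : ℝ) T, Integrable (M s) P)
    (hM_mart : ∀ s ∈ Icc (0 : ℝ) T, ∀ u ∈ Icc (0 : ℝ) T, s ≤ u →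
      P[M u|F s] =ᵐ[P] M s)
    (μ : ℝ → Ω → EuclideanSpace ℝ (Fin d))
    (hμ_meas : Measurable (Function.uncurry μ))
    (C : ℝ) (hμ_bdd : ∀ s ∈ Icc (0 : ℝ) T, ∀ ω, ‖μ s ω‖ ≤ C)
    (hμ_cont : ∀ᵐ ω ∂P, ContinuousOn (fun s => μ s ω) (Icc (0 : ℝ) T))
    (x₀ : EuclideanSpace ℝ (Fin d))
    (X : ℝ → Ω → EuclideanSpace ℝ (Fin d))
    (hX : ∀ s ∈ Icc (0 : ℝ) T, ∀ ω, X s ω = x₀ + (∫ r in (0 : ℝ)..s, μ r ω) + M s ω)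
    (G : MeasurableSpace Ω) (hG : G ≤ F t) :
    Tendsto (fun Δ : ℝ =>
        ∫ ω, ‖Δ⁻¹ • (P[fun ω' => X (t + Δ) ω' - X t ω'|G]) ω - (P[μ t|G]) ω‖ ∂P)
      (𝓝[Ioc (0 : ℝ) (T - t)] 0) (𝓝 0) := by
  have htIcc : t ∈ Icc (0 : ℝ) T := ⟨ht.1, ht.2.le⟩
  have hG0 : G ≤ m0 := hG.trans (F.le t)
  have hΩ : Nonempty Ω := by
    rcases isEmpty_or_nonempty Ω with h | h
    · exfalso
      have : P univ = 1 := measure_univ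
      simp [Set.univ_eq_empty_iff.2 h] at this
    · exact h
  have hC : 0 ≤ C := le_trans (norm_nonneg _) (hμ_bdd t htIcc (Classical.arbitrary Ω))
  -- integrability of μ r
  have hμr_meas : ∀ r : ℝ, Measurable[m0] (μ r) := fun r =>
    hμ_meas.comp measurable_prodMk_left
  have hμ_int : ∀ r ∈ Icc (0 : ℝ) T, Integrable (μ r) P := fun r hr =>
    ⟨(hμr_meas r).aestronglyMeasurable,
      HasFiniteIntegral.of_bounded (C := C) (ae_of_all _ (hμ_bdd r hr))⟩
  -- interval integrability in time
  have hII : ∀ ω, ∀ a ∈ Icc (0 : ℝ) T, ∀ b ∈ Icc (0 : ℝ) T,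
      IntervalIntegrable (fun r => μ r ω) volume a b := by
    intro ω a ha b hb
    rw [intervalIntegrable_iff]
    have hsub : Set.uIoc a b ⊆ Icc (0 : ℝ) T :=
      (Set.Ioc_subset_Icc_self).trans (Set.uIcc_subset_Icc ha hb)
    refine Integrable.mono' (g := fun _ => C)
      (integrableOn_const measure_Ioc_lt_top.ne)
      ((hμ_meas.comp (measurable_id.prodMk measurable_const)).aestronglyMeasurable)
      ?_
    filter_upwards [ae_restrict_mem measurableSet_uIoc] with r hr
    exact hμ_bdd r (hsub hr) ω
  -- measurability of ω ↦ ∫ r in t..t+Δ, μ r ω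
  have hI_meas : ∀ Δ : ℝ, 0 < Δ →
      AEStronglyMeasurable[m0] (fun ω => ∫ r in t..t + Δ, μ r ω) P := by
    intro Δ hΔ
    have h1 : (fun ω => ∫ r in t..t + Δ, μ r ω)
        = fun ω => ∫ r in Ioc t (t + Δ), μ r ω ∂volume := by
      funext ω
      rw [intervalIntegral.integral_of_le (by linarith)]
    rw [h1]
    have h2 : StronglyMeasurable[m0] (fun ω => ∫ r in Ioc t (t + Δ), μ r ω ∂volume) :=
      @MeasureTheory.StronglyMeasurable.integral_prod_right' Ω ℝ (EuclideanSpace ℝ (Fin d))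
        m0 _ (volume.restrict (Ioc t (t + Δ))) _ _ _ _
        ((hμ_meas.comp (@measurable_swap Ω ℝ m0 _)).stronglyMeasurable)
    exact h2.aestronglyMeasurable
  -- bound on the interval integral
  have hIbdd : ∀ Δ ∈ Ioc (0 : ℝ) (T - t), ∀ ω,
      ‖∫ r in t..t + Δ, μ r ω‖ ≤ C * Δ := by
    intro Δ hΔ ω
    have h1 : ∀ r ∈ Set.uIoc t (t + Δ), ‖μ r ω‖ ≤ C := by
      intro r hr
      rw [Set.uIoc_of_le (by linarith [hΔ.1])] at hr
      exact hμ_bdd r ⟨by linarith [hr.1, ht.1], by linarith [hr.2, hΔ.2]⟩ ω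
    calc ‖∫ r in t..t + Δ, μ r ω‖ ≤ C * |t + Δ - t| :=
          intervalIntegral.norm_integral_le_of_norm_le_const h1
      _ = C * Δ := by rw [add_sub_cancel_left, abs_of_pos hΔ.1]
  -- integrability of the interval integral
  have hIint : ∀ Δ ∈ Ioc (0 : ℝ) (T - t),
      Integrable (fun ω => ∫ r in t..t + Δ, μ r ω) P := fun Δ hΔ =>
    ⟨hI_meas Δ hΔ.1, HasFiniteIntegral.of_bounded (C := C * Δ)
      (ae_of_all _ (hIbdd Δ hΔ))⟩
  -- the martingale increment has zero conditional expectation given G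
  have hMG : ∀ Δ ∈ Ioc (0 : ℝ) (T - t),
      P[fun ω => M (t + Δ) ω - M t ω|G] =ᵐ[P] 0 := by
    intro Δ hΔ
    have hsIcc : t + Δ ∈ Icc (0 : ℝ) T := ⟨by linarith [ht.1, hΔ.1], by linarith [hΔ.2]⟩
    have h1 : P[M (t + Δ) - M t|F t] =ᵐ[P] 0 := by
      have h2 := condExp_sub (μ := P) (m := F t) (hM_int (t + Δ) hsIcc) (hM_int t htIcc)
      have h3 := hM_mart t htIcc (t + Δ) hsIcc (by linarith [hΔ.1])
      have h4 : P[M t|F t] = M t :=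
        condExp_of_stronglyMeasurable (F.le t) (hM_adapted t htIcc) (hM_int t htIcc)
      filter_upwards [h2, h3] with ω h2ω h3ω
      simp only [Pi.sub_apply, Pi.zero_apply] at *
      rw [h2ω, h3ω, h4, sub_self]
    calc P[fun ω => M (t + Δ) ω - M t ω|G]
        =ᵐ[P] P[P[M (t + Δ) - M t|F t]|G] :=
          (condExp_condExp_of_le hG (F.le t) (f := M (t + Δ) - M t)).symm
      _ =ᵐ[P] P[(0 : Ω → EuclideanSpace ℝ (Fin d))|G] := condExp_congr_ae h1
      _ = 0 := condExp_zero
  -- key pointwise identity for the increment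
  have hkey : ∀ Δ ∈ Ioc (0 : ℝ) (T - t), ∀ ω,
      X (t + Δ) ω - X t ω = (∫ r in t..t + Δ, μ r ω) + (M (t + Δ) ω - M t ω) := by
    intro Δ hΔ ω
    have hsIcc : t + Δ ∈ Icc (0 : ℝ) T := ⟨by linarith [ht.1, hΔ.1], by linarith [hΔ.2]⟩
    have h0 : (0 : ℝ) ∈ Icc (0 : ℝ) T := ⟨le_refl _, hT.le⟩
    have hsub : (∫ r in (0 : ℝ)..t + Δ, μ r ω) - (∫ r in (0 : ℝ)..t, μ r ω)
        = ∫ r in t..t + Δ, μ r ω :=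
      intervalIntegral.integral_interval_sub_left (hII ω 0 h0 (t + Δ) hsIcc)
        (hII ω 0 h0 t htIcc)
    rw [hX (t + Δ) hsIcc ω, hX t htIcc ω, ← hsub]
    abel
  -- per-Δ bound via conditional Jensen (with factor d)
  have hbound : ∀ Δ ∈ Ioc (0 : ℝ) (T - t),
      ∫ ω, ‖Δ⁻¹ • (P[fun ω' => X (t + Δ) ω' - X t ω'|G]) ω - (P[μ t|G]) ω‖ ∂P
        ≤ (d : ℝ) * ∫ ω, ‖Δ⁻¹ • (∫ r in t..t + Δ, μ r ω) - μ t ω‖ ∂P := by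
    intro Δ hΔ
    have hsIcc : t + Δ ∈ Icc (0 : ℝ) T := ⟨by linarith [ht.1, hΔ.1], by linarith [hΔ.2]⟩
    have hIi := hIint Δ hΔ
    have hμti := hμ_int t htIcc
    have hsm : Integrable (Δ⁻¹ • fun ω => ∫ r in t..t + Δ, μ r ω) P := hIi.smul Δ⁻¹
    have hg_int : Integrable (fun ω => Δ⁻¹ • (∫ r in t..t + Δ, μ r ω) - μ t ω) P :=
      hsm.sub hμti
    have hMdiff : Integrable (fun ω => M (t + Δ) ω - M t ω) P :=
      (hM_int (t + Δ) hsIcc).sub (hM_int t htIcc)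
    -- identify the conditional expectation
    have hfeq : (fun ω' => X (t + Δ) ω' - X t ω')
        = fun ω => (∫ r in t..t + Δ, μ r ω) + (M (t + Δ) ω - M t ω) :=
      funext (hkey Δ hΔ)
    have hstep1 : P[fun ω' => X (t + Δ) ω' - X t ω'|G]
        =ᵐ[P] P[fun ω => ∫ r in t..t + Δ, μ r ω|G] := by
      rw [hfeq]
      calc P[fun ω => (∫ r in t..t + Δ, μ r ω) + (M (t + Δ) ω - M t ω)|G]
          =ᵐ[P] P[fun ω => ∫ r in t..t + Δ, μ r ω|G]
              + P[fun ω => M (t + Δ) ω - M t ω|G] := condExp_add hIi hMdiff G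
        _ =ᵐ[P] P[fun ω => ∫ r in t..t + Δ, μ r ω|G] := by
            filter_upwards [hMG Δ hΔ] with ω hω
            simp [hω]
    have hstep2 : (fun ω => Δ⁻¹ • (P[fun ω' => X (t + Δ) ω' - X t ω'|G]) ω
          - (P[μ t|G]) ω)
        =ᵐ[P] P[(Δ⁻¹ • fun ω => ∫ r in t..t + Δ, μ r ω) - μ t|G] := by
      have hsmul := condExp_smul (μ := P) (m := G) Δ⁻¹
        (fun ω => ∫ r in t..t + Δ, μ r ω)
      have hsub := condExp_sub (μ := P) (m := G) hsm hμti
      filter_upwards [hstep1, hsmul, hsub] with ω h1 h2 h3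
      simp only [Pi.sub_apply, Pi.smul_apply] at *
      rw [h3, h2, h1]
    calc ∫ ω, ‖Δ⁻¹ • (P[fun ω' => X (t + Δ) ω' - X t ω'|G]) ω - (P[μ t|G]) ω‖ ∂P
        = ∫ ω, ‖(P[(Δ⁻¹ • fun ω => ∫ r in t..t + Δ, μ r ω) - μ t|G]) ω‖ ∂P :=
          integral_congr_ae (hstep2.mono fun ω hω => by simp only at hω ⊢; rw [hω])
      _ ≤ (d : ℝ) * ∫ ω, ‖Δ⁻¹ • (∫ r in t..t + Δ, μ r ω) - μ t ω‖ ∂P :=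
          integral_norm_condexp_le_dim hG0 hg_int
  -- the dominating quantity tends to 0
  have hdom : Tendsto (fun Δ : ℝ =>
      ∫ ω, ‖Δ⁻¹ • (∫ r in t..t + Δ, μ r ω) - μ t ω‖ ∂P)
      (𝓝[Ioc (0 : ℝ) (T - t)] 0) (𝓝 0) := by
    have hmain : Tendsto (fun Δ : ℝ =>
        ∫ ω, ‖Δ⁻¹ • (∫ r in t..t + Δ, μ r ω) - μ t ω‖ ∂P)
        (𝓝[Ioc (0 : ℝ) (T - t)] 0) (𝓝 (∫ (_ : Ω), (0 : ℝ) ∂P)) := by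
      refine tendsto_integral_filter_of_dominated_convergence (bound := fun _ => C + C)
          ?_ ?_ (integrable_const _) ?_
      · filter_upwards [self_mem_nhdsWithin] with Δ hΔ
        exact (((hI_meas Δ hΔ.1).const_smul Δ⁻¹).sub
          (hμr_meas t).aestronglyMeasurable).norm
      · filter_upwards [self_mem_nhdsWithin] with Δ hΔ
        refine ae_of_all _ fun ω => ?_
        rw [Real.norm_eq_abs, abs_of_nonneg (norm_nonneg _)]
        have h1 : ‖Δ⁻¹ • ∫ r in t..t + Δ, μ r ω‖ ≤ C := by
          rw [norm_smul, Real.norm_eq_abs, abs_of_pos (inv_pos.2 hΔ.1)]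
          calc Δ⁻¹ * ‖∫ r in t..t + Δ, μ r ω‖ ≤ Δ⁻¹ * (C * Δ) := by
                exact mul_le_mul_of_nonneg_left (hIbdd Δ hΔ ω) (inv_pos.2 hΔ.1).le
            _ = C := by
                rw [mul_comm C Δ, ← mul_assoc, inv_mul_cancel₀ hΔ.1.ne', one_mul]
        calc ‖Δ⁻¹ • (∫ r in t..t + Δ, μ r ω) - μ t ω‖
            ≤ ‖Δ⁻¹ • ∫ r in t..t + Δ, μ r ω‖ + ‖μ t ω‖ := norm_sub_le _ _
          _ ≤ C + C := add_le_add h1 (hμ_bdd t htIcc ω)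
      · filter_upwards [hμ_cont] with ω hωc
        have hconv : Tendsto (fun Δ : ℝ => Δ⁻¹ • ∫ r in t..t + Δ, μ r ω)
            (𝓝[Ioc (0 : ℝ) (T - t)] 0) (𝓝 (μ t ω)) := by
          rw [Metric.tendsto_nhdsWithin_nhds]
          intro ε hε
          have hct : ContinuousWithinAt (fun s => μ s ω) (Icc (0 : ℝ) T) t := hωc t htIcc
          rw [Metric.continuousWithinAt_iff] at hct
          obtain ⟨δ, hδ, hδ'⟩ := hct (ε / 2) (by linarith)
          refine ⟨δ, hδ, fun {Δ} hΔ hΔδ => ?_⟩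
          have hΔ0 : 0 < Δ := hΔ.1
          have hΔδ' : Δ < δ := by
            rwa [Real.dist_eq, sub_zero, abs_of_pos hΔ0] at hΔδ
          have hIconst : (∫ r in t..t + Δ, (μ t ω : EuclideanSpace ℝ (Fin d)))
              = Δ • μ t ω := by
            rw [intervalIntegral.integral_const, add_sub_cancel_left]
          have hiII : IntervalIntegrable (fun r => μ r ω) volume t (t + Δ) :=
            hII ω t htIcc (t + Δ) ⟨by linarith [ht.1], by linarith [hΔ.2]⟩
          have hdiff : Δ⁻¹ • (∫ r in t..t + Δ, μ r ω) - μ t ω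
              = Δ⁻¹ • ∫ r in t..t + Δ, (μ r ω - μ t ω) := by
            rw [intervalIntegral.integral_sub hiII intervalIntegrable_const, hIconst,
              smul_sub, smul_smul, inv_mul_cancel₀ hΔ0.ne', one_smul]
          have hnormint : ‖∫ r in t..t + Δ, (μ r ω - μ t ω)‖ ≤ (ε / 2) * |t + Δ - t| := by
            refine intervalIntegral.norm_integral_le_of_norm_le_const fun r hr => ?_
            rw [Set.uIoc_of_le (by linarith)] at hr
            have hrIcc : r ∈ Icc (0 : ℝ) T :=
              ⟨by linarith [hr.1, ht.1], by linarith [hr.2, hΔ.2]⟩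
            have hrd : dist r t < δ := by
              rw [Real.dist_eq, abs_of_pos (by linarith [hr.1])]
              linarith [hr.2]
            exact (hδ' hrIcc hrd).le.trans_eq' (by rw [dist_eq_norm])
          rw [dist_eq_norm, hdiff, norm_smul, Real.norm_eq_abs, abs_of_pos (inv_pos.2 hΔ0)]
          calc Δ⁻¹ * ‖∫ r in t..t + Δ, (μ r ω - μ t ω)‖
              ≤ Δ⁻¹ * ((ε / 2) * |t + Δ - t|) :=
                mul_le_mul_of_nonneg_left hnormint (inv_pos.2 hΔ0).le
            _ = ε / 2 := by
                rw [add_sub_cancel_left, abs_of_pos hΔ0, mul_comm (ε / 2) Δ,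
                  ← mul_assoc, inv_mul_cancel₀ hΔ0.ne', one_mul]
            _ < ε := by linarith
        have := (hconv.sub (tendsto_const_nhds (x := μ t ω))).norm
        simpa using this
    simpa using hmain
  -- squeeze
  refine squeeze_zero' (g := fun Δ : ℝ =>
      (d : ℝ) * ∫ ω, ‖Δ⁻¹ • (∫ r in t..t + Δ, μ r ω) - μ t ω‖ ∂P) ?_ ?_ ?_
  · filter_upwards [self_mem_nhdsWithin] with Δ _
    exact integral_nonneg fun ω => norm_nonneg _
  · filter_upwards [self_mem_nhdsWithin] with Δ hΔ
    exact hbound Δ hΔ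
  · have := hdom.const_mul (d : ℝ)
    simpa using this
end

section
/- Let T > 0 and t ∈ [0,T). Let (F_s)_{s∈[0,T]} be a filtration on a probability space (Ω, 𝓕, P), let M : [0,T] → Ω → ℝ be an F-martingale with each M_s square-integrable, and let Σ : [0,T] × Ω → ℝ be jointly measurable, uniformly bounded, with s ↦ Σ_s(ω) continuous on [0,T] for P-a.e. ω, and such that s ↦ M_s² − ∫₀^s Σ_r dr is also an F-martingale. Then for every sub-σ-algebra G ⊆ F_t, the quadratic increment estimator converges in L¹: E[ | (1/Δ) E[(M_{t+Δ} − M_t)² | G] − E[Σ_t | G] | ] → 0 as Δ → 0⁺ (Δ ranging over (0, T − t]). -/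
open MeasureTheory Filter Set Topology

/-- For a square-integrable real `F`-martingale `M` with compensator `∫ Σ`
(`Σ` jointly measurable, bounded, a.s. time-continuous), for every sub-σ-algebra `G ⊆ F t`
the quadratic increment estimator converges in L¹:
`E[ | (1/Δ) E[(M_{t+Δ} − M_t)² | G] − E[Σ_t | G] | ] → 0` as `Δ → 0⁺`, `Δ ∈ (0, T − t]`. -/
theorem statement5
    {Ω : Type*} {m0 : MeasurableSpace Ω} {P : Measure Ω} [IsProbabilityMeasure P]
    {T t : ℝ}
    (hT : 0 < T) (ht : t ∈ Ico (0 : ℝ) T)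
    (F : Filtration ℝ m0)
    (M : ℝ → Ω → ℝ)
    (hM_adapted : ∀ s ∈ Icc (0 : ℝ) T, StronglyMeasurable[F s] (M s))
    (hM_sq : ∀ s ∈ Icc (0 : ℝ) T, MemLp (M s) 2 P)
    (hM_mart : ∀ s ∈ Icc (0 : ℝ) T, ∀ u ∈ Icc (0 : ℝ) T, s ≤ u →
      P[M u|F s] =ᵐ[P] M s)
    (Sig : ℝ → Ω → ℝ)
    (hSig_meas : Measurable (Function.uncurry Sig))
    (C : ℝ) (hSig_bdd : ∀ s ∈ Icc (0 : ℝ) T, ∀ ω, |Sig s ω| ≤ C)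
    (hSig_cont : ∀ᵐ ω ∂P, ContinuousOn (fun s => Sig s ω) (Icc (0 : ℝ) T))
    (hN_adapted : ∀ s ∈ Icc (0 : ℝ) T,
      StronglyMeasurable[F s] (fun ω => (M s ω) ^ 2 - ∫ r in (0 : ℝ)..s, Sig r ω))
    (hN_int : ∀ s ∈ Icc (0 : ℝ) T,
      Integrable (fun ω => (M s ω) ^ 2 - ∫ r in (0 : ℝ)..s, Sig r ω) P)
    (hN_mart : ∀ s ∈ Icc (0 : ℝ) T, ∀ u ∈ Icc (0 : ℝ) T, s ≤ u →
      P[fun ω => (M u ω) ^ 2 - ∫ r in (0 : ℝ)..u, Sig r ω|F s]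
        =ᵐ[P] fun ω => (M s ω) ^ 2 - ∫ r in (0 : ℝ)..s, Sig r ω)
    (G : MeasurableSpace Ω) (hG : G ≤ F t) :
    Tendsto (fun Δ : ℝ =>
        ∫ ω, |(1 / Δ) * (P[fun ω' => (M (t + Δ) ω' - M t ω') ^ 2|G]) ω
          - (P[Sig t|G]) ω| ∂P)
      (𝓝[Ioc (0 : ℝ) (T - t)] 0) (𝓝 0) := by
  classical
  obtain ⟨ht0, htT⟩ := ht
  have htI : t ∈ Icc (0 : ℝ) T := ⟨ht0, htT.le⟩
  have hFt : F t ≤ m0 := F.le t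
  have hGm0 : G ≤ m0 := hG.trans hFt
  haveI : SigmaFinite (P.trim hFt) := inferInstance
  haveI : SigmaFinite (P.trim hGm0) := inferInstance
  -- The comparison process
  set K : ℝ → Ω → ℝ := fun Δ ω => (1 / Δ) * ∫ r in t..(t + Δ), (Sig r ω - Sig t ω) with hKdef
  -- measurability of sections of Sig
  have hSigt_meas : Measurable[m0] (Sig t) :=
    hSig_meas.comp (measurable_const.prodMk measurable_id)
  have hSigt_int : Integrable (Sig t) P := by
    refine (integrable_const C).mono' hSigt_meas.aestronglyMeasurable ?_
    exact Eventually.of_forall fun ω => by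
      simpa [Real.norm_eq_abs] using hSig_bdd t htI ω
  -- Step 1: key per-Δ bound
  have key : ∀ Δ ∈ Ioc (0 : ℝ) (T - t),
      (∫ ω, |(1 / Δ) * (P[fun ω' => (M (t + Δ) ω' - M t ω') ^ 2|G]) ω
          - (P[Sig t|G]) ω| ∂P) ≤ ∫ ω, |K Δ ω| ∂P := by
    intro Δ hΔ
    obtain ⟨hΔ0, hΔT⟩ := hΔ
    have htu : t ≤ t + Δ := by linarith
    have huI : t + Δ ∈ Icc (0 : ℝ) T := ⟨by linarith, by linarith⟩
    have hMt := hM_sq t htI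
    have hMu := hM_sq (t + Δ) huI
    have hMufun : Integrable (M (t + Δ)) P := hMu.integrable one_le_two
    have hMtfun : Integrable (M t) P := hMt.integrable one_le_two
    have hf_int : Integrable (fun ω => (M (t + Δ) ω - M t ω) ^ 2) P :=
      (hMu.sub hMt).integrable_sq
    have hcross : Integrable (fun ω => M t ω * (M (t + Δ) ω - M t ω)) P := by
      have h1 : Integrable
          (fun ω => ((M (t + Δ) ω) ^ 2 - (M t ω) ^ 2 - (M (t + Δ) ω - M t ω) ^ 2) * (1 / 2)) P :=
        ((hMu.integrable_sq.sub hMt.integrable_sq).sub hf_int).mul_const _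
      exact h1.congr (Eventually.of_forall fun ω => by ring)
    -- the integrated compensator increment
    set Gf : Ω → ℝ := fun ω => ∫ r in t..(t + Δ), Sig r ω with hGfdef
    have hGf_meas : StronglyMeasurable[m0] Gf := by
      have h1 : StronglyMeasurable[m0]
          (fun ω : Ω => ∫ r, Sig r ω ∂(volume.restrict (Ioc t (t + Δ)))) := by
        have hu : StronglyMeasurable[@Prod.instMeasurableSpace Ω ℝ m0 Real.measurableSpace]
            (Function.uncurry (fun (ω : Ω) (r : ℝ) => Sig r ω)) := by
          have hm : Measurable[@Prod.instMeasurableSpace Ω ℝ m0 Real.measurableSpace]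
              (fun p : Ω × ℝ => Function.uncurry Sig (p.2, p.1)) :=
            hSig_meas.comp (by exact measurable_snd.prodMk measurable_fst)
          exact hm.stronglyMeasurable
        exact @MeasureTheory.StronglyMeasurable.integral_prod_right Ω ℝ ℝ m0
          Real.measurableSpace (volume.restrict (Ioc t (t + Δ))) _ _ _ _ hu
      have h2 : Gf = fun ω : Ω => ∫ r, Sig r ω ∂(volume.restrict (Ioc t (t + Δ))) := by
        funext ω
        show (∫ r in t..(t + Δ), Sig r ω) = _
        exact intervalIntegral.integral_of_le htu
      rw [h2]; exact h1
    have hGf_bdd : ∀ ω, ‖Gf ω‖ ≤ C * Δ := by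
      intro ω
      have hb : ∀ r ∈ Set.uIoc t (t + Δ), ‖Sig r ω‖ ≤ C := by
        intro r hr
        rw [uIoc_of_le htu] at hr
        have hrI : r ∈ Icc (0 : ℝ) T := ⟨by linarith [hr.1], by linarith [hr.2]⟩
        simpa [Real.norm_eq_abs] using hSig_bdd r hrI ω
      have := intervalIntegral.norm_integral_le_of_norm_le_const hb
      simpa [abs_of_nonneg hΔ0.le] using this
    have hGf_int : Integrable Gf P :=
      (integrable_const (C * Δ)).mono' hGf_meas.aestronglyMeasurable
        (Eventually.of_forall hGf_bdd)
    -- martingale facts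
    have hMart : P[M (t + Δ)|F t] =ᵐ[P] M t := hM_mart t htI (t + Δ) huI htu
    have hNu : P[fun ω => (M (t + Δ) ω) ^ 2 - ∫ r in (0 : ℝ)..(t + Δ), Sig r ω|F t]
        =ᵐ[P] fun ω => (M t ω) ^ 2 - ∫ r in (0 : ℝ)..t, Sig r ω :=
      hN_mart t htI (t + Δ) huI htu
    have hNt_eq : P[fun ω => (M t ω) ^ 2 - ∫ r in (0 : ℝ)..t, Sig r ω|F t]
        = fun ω => (M t ω) ^ 2 - ∫ r in (0 : ℝ)..t, Sig r ω :=
      condExp_of_stronglyMeasurable hFt (hN_adapted t htI) (hN_int t htI)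
    have hMt_eq : P[M t|F t] = M t :=
      condExp_of_stronglyMeasurable hFt (hM_adapted t htI) hMtfun
    have hMdiff : P[M (t + Δ) - M t|F t] =ᵐ[P] 0 := by
      refine (condExp_sub hMufun hMtfun _).trans ?_
      rw [hMt_eq]
      filter_upwards [hMart] with ω hω
      simp [hω]
    have hcross_cond : P[M t * (M (t + Δ) - M t)|F t] =ᵐ[P] 0 := by
      have hmul := condExp_mul_of_stronglyMeasurable_left (μ := P) (hM_adapted t htI)
        (by exact hcross) (hMufun.sub hMtfun)
      refine hmul.trans ?_
      filter_upwards [hMdiff] with ω hω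
      simp [Pi.mul_apply, hω]
    -- pointwise decomposition (a.e. in ω, using continuity for interval additivity)
    have hdecomp : (fun ω => (M (t + Δ) ω - M t ω) ^ 2) =ᵐ[P]
        ((fun ω => (M (t + Δ) ω) ^ 2 - ∫ r in (0 : ℝ)..(t + Δ), Sig r ω)
          - (fun ω => (M t ω) ^ 2 - ∫ r in (0 : ℝ)..t, Sig r ω)
          - (2 : ℝ) • (M t * (M (t + Δ) - M t)) + Gf) := by
      filter_upwards [hSig_cont] with ω hcont
      have hint : ∀ a b : ℝ, a ∈ Icc (0 : ℝ) T → b ∈ Icc (0 : ℝ) T →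
          IntervalIntegrable (fun r => Sig r ω) volume a b := fun a b ha hb =>
        (hcont.mono (uIcc_subset_Icc ha hb)).intervalIntegrable
      have hadd : (∫ r in (0 : ℝ)..t, Sig r ω) + ∫ r in t..(t + Δ), Sig r ω
          = ∫ r in (0 : ℝ)..(t + Δ), Sig r ω :=
        intervalIntegral.integral_add_adjacent_intervals
          (hint 0 t ⟨le_refl 0, hT.le⟩ htI) (hint t (t + Δ) htI huI)
      simp only [Pi.add_apply, Pi.sub_apply, Pi.smul_apply, Pi.mul_apply, smul_eq_mul, hGfdef]
      have h2 : (M (t + Δ) ω - M t ω) ^ 2 = (M (t + Δ) ω) ^ 2 - (M t ω) ^ 2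
          - 2 * (M t ω * (M (t + Δ) ω - M t ω)) := by ring
      rw [h2]
      linarith [hadd]
    -- conditional expectation given F t
    have hcond : P[fun ω => (M (t + Δ) ω - M t ω) ^ 2|F t] =ᵐ[P] P[Gf|F t] := by
      have iNu : Integrable (fun ω => (M (t + Δ) ω) ^ 2 - ∫ r in (0 : ℝ)..(t + Δ), Sig r ω) P :=
        hN_int (t + Δ) huI
      have iNt : Integrable (fun ω => (M t ω) ^ 2 - ∫ r in (0 : ℝ)..t, Sig r ω) P :=
        hN_int t htI
      have icr : Integrable ((2 : ℝ) • (M t * (M (t + Δ) - M t))) P := by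
        exact (hcross.smul (2 : ℝ))
      calc P[fun ω => (M (t + Δ) ω - M t ω) ^ 2|F t]
          =ᵐ[P] P[(fun ω => (M (t + Δ) ω) ^ 2 - ∫ r in (0 : ℝ)..(t + Δ), Sig r ω)
            - (fun ω => (M t ω) ^ 2 - ∫ r in (0 : ℝ)..t, Sig r ω)
            - (2 : ℝ) • (M t * (M (t + Δ) - M t)) + Gf|F t] := condExp_congr_ae hdecomp
        _ =ᵐ[P] P[(fun ω => (M (t + Δ) ω) ^ 2 - ∫ r in (0 : ℝ)..(t + Δ), Sig r ω)
            - (fun ω => (M t ω) ^ 2 - ∫ r in (0 : ℝ)..t, Sig r ω)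
            - (2 : ℝ) • (M t * (M (t + Δ) - M t))|F t] + P[Gf|F t] :=
          condExp_add ((iNu.sub iNt).sub icr) hGf_int _
        _ =ᵐ[P] (P[(fun ω => (M (t + Δ) ω) ^ 2 - ∫ r in (0 : ℝ)..(t + Δ), Sig r ω)
            - (fun ω => (M t ω) ^ 2 - ∫ r in (0 : ℝ)..t, Sig r ω)|F t]
            - P[(2 : ℝ) • (M t * (M (t + Δ) - M t))|F t]) + P[Gf|F t] :=
          (condExp_sub (iNu.sub iNt) icr _).add EventuallyEq.rfl
        _ =ᵐ[P] ((P[fun ω => (M (t + Δ) ω) ^ 2 - ∫ r in (0 : ℝ)..(t + Δ), Sig r ω|F t]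
            - P[fun ω => (M t ω) ^ 2 - ∫ r in (0 : ℝ)..t, Sig r ω|F t])
            - (2 : ℝ) • P[M t * (M (t + Δ) - M t)|F t]) + P[Gf|F t] :=
          ((condExp_sub iNu iNt _).sub (condExp_smul (2 : ℝ) _ _)).add EventuallyEq.rfl
        _ =ᵐ[P] P[Gf|F t] := by
          rw [hNt_eq]
          filter_upwards [hNu, hcross_cond] with ω h1 h2
          simp only [Pi.add_apply, Pi.sub_apply, Pi.smul_apply, smul_eq_mul, h1, h2,
            Pi.zero_apply]
          try ring
    -- tower property down to G
    have hcondG : P[fun ω => (M (t + Δ) ω - M t ω) ^ 2|G] =ᵐ[P] P[Gf|G] :=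
      ((condExp_condExp_of_le hG hFt).symm.trans (condExp_congr_ae hcond)).trans
        (condExp_condExp_of_le hG hFt)
    -- identify the estimator error with a conditional expectation of K Δ
    have hKae : ((1 / Δ) • Gf - Sig t) =ᵐ[P] K Δ := by
      filter_upwards [hSig_cont] with ω hcont
      have hii : IntervalIntegrable (fun r => Sig r ω) volume t (t + Δ) :=
        (hcont.mono (uIcc_subset_Icc htI huI)).intervalIntegrable
      have hsub : ∫ r in t..(t + Δ), (Sig r ω - Sig t ω)
          = Gf ω - Δ * Sig t ω := by
        rw [intervalIntegral.integral_sub hii (intervalIntegrable_const)]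
        rw [intervalIntegral.integral_const]
        simp [hGfdef, smul_eq_mul]
      simp only [hKdef, Pi.sub_apply, Pi.smul_apply, smul_eq_mul]
      rw [hsub]
      field_simp
    have hfinal : (fun ω => (1 / Δ) * (P[fun ω' => (M (t + Δ) ω' - M t ω') ^ 2|G]) ω
        - (P[Sig t|G]) ω) =ᵐ[P] P[K Δ|G] := by
      have e1 : (fun ω => (1 / Δ) * (P[fun ω' => (M (t + Δ) ω' - M t ω') ^ 2|G]) ω
          - (P[Sig t|G]) ω)
          = (1 / Δ) • P[fun ω' => (M (t + Δ) ω' - M t ω') ^ 2|G] - P[Sig t|G] := by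
        funext ω; simp [smul_eq_mul]
      rw [e1]
      calc (1 / Δ) • P[fun ω' => (M (t + Δ) ω' - M t ω') ^ 2|G] - P[Sig t|G]
          =ᵐ[P] (1 / Δ) • P[Gf|G] - P[Sig t|G] := by
            filter_upwards [hcondG] with ω hω
            simp only [Pi.sub_apply, Pi.smul_apply, hω]
        _ =ᵐ[P] P[(1 / Δ) • Gf|G] - P[Sig t|G] := by
            filter_upwards [condExp_smul (μ := P) (m := G) (1 / Δ) Gf] with ω hω
            simp only [Pi.sub_apply, hω]
        _ =ᵐ[P] P[(1 / Δ) • Gf - Sig t|G] :=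
            (condExp_sub (hGf_int.smul (1 / Δ)) hSigt_int _).symm
        _ =ᵐ[P] P[K Δ|G] := condExp_congr_ae hKae
    calc (∫ ω, |(1 / Δ) * (P[fun ω' => (M (t + Δ) ω' - M t ω') ^ 2|G]) ω
          - (P[Sig t|G]) ω| ∂P)
        = ∫ ω, |(P[K Δ|G]) ω| ∂P := by
          refine integral_congr_ae ?_
          filter_upwards [hfinal] with ω hω
          rw [hω]
      _ ≤ ∫ ω, |K Δ ω| ∂P := integral_abs_condExp_le _
  -- Step 2: the reference quantity tends to 0 (dominated convergence)
  have hKmeas : ∀ Δ ∈ Ioc (0 : ℝ) (T - t), StronglyMeasurable[m0] (K Δ) := by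
    intro Δ hΔ
    have htu : t ≤ t + Δ := by linarith [hΔ.1]
    have h1 : StronglyMeasurable[m0]
        (fun ω : Ω => ∫ r, (Sig r ω - Sig t ω) ∂(volume.restrict (Ioc t (t + Δ)))) := by
      have hu : StronglyMeasurable[@Prod.instMeasurableSpace Ω ℝ m0 Real.measurableSpace]
          (Function.uncurry (fun (ω : Ω) (r : ℝ) => Sig r ω - Sig t ω)) := by
        have hm : Measurable[@Prod.instMeasurableSpace Ω ℝ m0 Real.measurableSpace]
            (fun p : Ω × ℝ => Function.uncurry Sig (p.2, p.1) - Function.uncurry Sig (t, p.1)) :=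
          (hSig_meas.comp (by exact measurable_snd.prodMk measurable_fst)).sub
            (hSig_meas.comp (by exact measurable_const.prodMk measurable_fst))
        exact hm.stronglyMeasurable
      exact @MeasureTheory.StronglyMeasurable.integral_prod_right Ω ℝ ℝ m0
        Real.measurableSpace (volume.restrict (Ioc t (t + Δ))) _ _ _ _ hu
    have h2 : K Δ = fun ω => (1 / Δ) *
        ∫ r, (Sig r ω - Sig t ω) ∂(volume.restrict (Ioc t (t + Δ))) := by
      funext ω
      show (1 / Δ) * (∫ r in t..(t + Δ), (Sig r ω - Sig t ω)) = _
      rw [intervalIntegral.integral_of_le htu]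
    rw [h2]
    exact ((h1.measurable).const_mul _).stronglyMeasurable
  have hKbdd : ∀ Δ ∈ Ioc (0 : ℝ) (T - t), ∀ ω, |K Δ ω| ≤ 2 * C := by
    intro Δ hΔ ω
    have htu : t ≤ t + Δ := by linarith [hΔ.1]
    have hb : ∀ r ∈ Set.uIoc t (t + Δ), ‖Sig r ω - Sig t ω‖ ≤ 2 * C := by
      intro r hr
      rw [uIoc_of_le htu] at hr
      have hrI : r ∈ Icc (0 : ℝ) T := ⟨by linarith [hΔ.2, hr.1], by linarith [hΔ.2, hr.2]⟩
      rw [Real.norm_eq_abs]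
      calc |Sig r ω - Sig t ω| ≤ |Sig r ω| + |Sig t ω| := abs_sub _ _
        _ ≤ C + C := add_le_add (hSig_bdd r hrI ω) (hSig_bdd t htI ω)
        _ = 2 * C := by ring
    have hnorm := intervalIntegral.norm_integral_le_of_norm_le_const hb
    show |(1 / Δ) * ∫ r in t..(t + Δ), (Sig r ω - Sig t ω)| ≤ 2 * C
    rw [abs_mul]
    have h3 : |t + Δ - t| = Δ := by rw [abs_of_nonneg (by linarith [hΔ.1])]; ring
    rw [h3] at hnorm
    have h4 : |1 / Δ| = 1 / Δ := abs_of_pos (one_div_pos.mpr hΔ.1)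
    calc |1 / Δ| * |∫ r in t..(t + Δ), (Sig r ω - Sig t ω)|
        ≤ (1 / Δ) * (2 * C * Δ) := by
          rw [h4]
          exact mul_le_mul_of_nonneg_left (by simpa [Real.norm_eq_abs] using hnorm)
            (le_of_lt (one_div_pos.mpr hΔ.1))
      _ = 2 * C := by
          rw [mul_comm (1 / Δ)]
          rw [mul_one_div, mul_div_assoc, div_self hΔ.1.ne', mul_one]
  have hKtend : ∀ᵐ ω ∂P, Tendsto (fun Δ => |K Δ ω|) (𝓝[Ioc (0 : ℝ) (T - t)] 0) (𝓝 0) := by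
    filter_upwards [hSig_cont] with ω hcont
    have h0 : Tendsto (fun Δ => K Δ ω) (𝓝[Ioc (0 : ℝ) (T - t)] 0) (𝓝 0) := by
      rw [Metric.tendsto_nhdsWithin_nhds]
      intro ε hε
      obtain ⟨δ, hδ, H⟩ := Metric.continuousWithinAt_iff.mp (hcont t htI) (ε / 2) (half_pos hε)
      refine ⟨δ, hδ, ?_⟩
      intro Δ hΔ hdist
      have hΔ0 := hΔ.1
      have htu : t ≤ t + Δ := by linarith
      have hΔδ : Δ < δ := by
        rw [Real.dist_eq, sub_zero, abs_of_pos hΔ0] at hdist; exact hdist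
      have hb : ∀ r ∈ Set.uIoc t (t + Δ), ‖Sig r ω - Sig t ω‖ ≤ ε / 2 := by
        intro r hr
        rw [uIoc_of_le htu] at hr
        have hrI : r ∈ Icc (0 : ℝ) T := ⟨by linarith [hr.1], by linarith [hΔ.2, hr.2]⟩
        have hrd : dist r t < δ := by
          rw [Real.dist_eq, abs_of_nonneg (by linarith [hr.1])]
          linarith [hr.2]
        have := H hrI hrd
        rw [Real.dist_eq] at this
        simpa [Real.norm_eq_abs] using this.le
      have hnorm := intervalIntegral.norm_integral_le_of_norm_le_const hb
      have h3 : |t + Δ - t| = Δ := by rw [abs_of_nonneg (by linarith)]; ring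
      rw [h3] at hnorm
      rw [Real.dist_eq, sub_zero]
      show |(1 / Δ) * ∫ r in t..(t + Δ), (Sig r ω - Sig t ω)| < ε
      rw [abs_mul, abs_of_pos (show (0:ℝ) < 1 / Δ from one_div_pos.mpr hΔ0)]
      calc (1 / Δ) * |∫ r in t..(t + Δ), (Sig r ω - Sig t ω)|
          ≤ (1 / Δ) * (ε / 2 * Δ) :=
            mul_le_mul_of_nonneg_left (by simpa [Real.norm_eq_abs] using hnorm)
              (by positivity)
        _ = ε / 2 := by field_simp
        _ < ε := by linarith
    have := h0.abs
    simpa using this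
  have hDCT : Tendsto (fun Δ => ∫ ω, |K Δ ω| ∂P) (𝓝[Ioc (0 : ℝ) (T - t)] 0) (𝓝 0) := by
    have h := tendsto_integral_filter_of_dominated_convergence (μ := P)
      (F := fun Δ ω => |K Δ ω|) (f := fun _ => (0 : ℝ)) (bound := fun _ => 2 * C)
      (Filter.eventually_of_mem self_mem_nhdsWithin fun Δ hΔ => by
        have hmK : Measurable[m0] fun ω => |K Δ ω| := by
          exact continuous_abs.measurable.comp (hKmeas Δ hΔ).measurable
        exact hmK.aestronglyMeasurable)
      (Filter.eventually_of_mem self_mem_nhdsWithin fun Δ hΔ =>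
        Eventually.of_forall fun ω => by
          simpa [Real.norm_eq_abs, abs_abs] using hKbdd Δ hΔ ω)
      (integrable_const _)
      (hKtend.mono fun ω hω => by simpa using hω)
    simpa using h
  refine tendsto_of_tendsto_of_tendsto_of_le_of_le' tendsto_const_nhds hDCT ?_ ?_
  · exact Eventually.of_forall fun Δ => integral_nonneg fun ω => abs_nonneg _
  · exact Filter.eventually_of_mem self_mem_nhdsWithin key
end

section
/- Let T > 0 and t ∈ [0,T). Let (F_s)_{s∈[0,T]} be a filtration on a probability space (Ω, 𝓕, P), let M, N : [0,T] → Ω → ℝ be F-martingales with each M_s and N_s square-integrable, and let Σ : [0,T] × Ω → ℝ be jointly measurable, uniformly bounded, with s ↦ Σ_s(ω) continuous on [0,T] for P-a.e. ω, and such that s ↦ M_s N_s − ∫₀^s Σ_r dr is also an F-martingale. Then for every sub-σ-algebra G ⊆ F_t, the cross increment estimator converges in L¹: E[ | (1/Δ) E[(M_{t+Δ} − M_t)(N_{t+Δ} − N_t) | G] − E[Σ_t | G] | ] → 0 as Δ → 0⁺ (Δ ranging over (0, T − t]). -/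
open MeasureTheory Filter Set Topology

/-- For square-integrable real `F`-martingales `M, N` whose product is
compensated by `∫ Σ` (`Σ` jointly measurable, bounded, a.s. time-continuous), for every
sub-σ-algebra `G ⊆ F t` the cross increment estimator converges in L¹:
`E[ | (1/Δ) E[(M_{t+Δ} − M_t)(N_{t+Δ} − N_t) | G] − E[Σ_t | G] | ] → 0` as `Δ → 0⁺`. -/
theorem statement6
    {Ω : Type*} {m0 : MeasurableSpace Ω} {P : Measure Ω} [IsProbabilityMeasure P]
    {T t : ℝ}
    (hT : 0 < T) (ht : t ∈ Ico (0 : ℝ) T)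
    (F : Filtration ℝ m0)
    (M N : ℝ → Ω → ℝ)
    (hM_adapted : ∀ s ∈ Icc (0 : ℝ) T, StronglyMeasurable[F s] (M s))
    (hM_sq : ∀ s ∈ Icc (0 : ℝ) T, MemLp (M s) 2 P)
    (hM_mart : ∀ s ∈ Icc (0 : ℝ) T, ∀ u ∈ Icc (0 : ℝ) T, s ≤ u →
      P[M u|F s] =ᵐ[P] M s)
    (hN_adapted : ∀ s ∈ Icc (0 : ℝ) T, StronglyMeasurable[F s] (N s))
    (hN_sq : ∀ s ∈ Icc (0 : ℝ) T, MemLp (N s) 2 P)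
    (hN_mart : ∀ s ∈ Icc (0 : ℝ) T, ∀ u ∈ Icc (0 : ℝ) T, s ≤ u →
      P[N u|F s] =ᵐ[P] N s)
    (Sig : ℝ → Ω → ℝ)
    (hSig_meas : Measurable (Function.uncurry Sig))
    (C : ℝ) (hSig_bdd : ∀ s ∈ Icc (0 : ℝ) T, ∀ ω, |Sig s ω| ≤ C)
    (hSig_cont : ∀ᵐ ω ∂P, ContinuousOn (fun s => Sig s ω) (Icc (0 : ℝ) T))
    (hMN_adapted : ∀ s ∈ Icc (0 : ℝ) T,
      StronglyMeasurable[F s] (fun ω => M s ω * N s ω - ∫ r in (0 : ℝ)..s, Sig r ω))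
    (hMN_int : ∀ s ∈ Icc (0 : ℝ) T,
      Integrable (fun ω => M s ω * N s ω - ∫ r in (0 : ℝ)..s, Sig r ω) P)
    (hMN_mart : ∀ s ∈ Icc (0 : ℝ) T, ∀ u ∈ Icc (0 : ℝ) T, s ≤ u →
      P[fun ω => M u ω * N u ω - ∫ r in (0 : ℝ)..u, Sig r ω|F s]
        =ᵐ[P] fun ω => M s ω * N s ω - ∫ r in (0 : ℝ)..s, Sig r ω)
    (G : MeasurableSpace Ω) (hG : G ≤ F t) :
    Tendsto (fun Δ : ℝ =>
        ∫ ω, |(1 / Δ) * (P[fun ω' => (M (t + Δ) ω' - M t ω') * (N (t + Δ) ω' - N t ω')|G]) ω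
          - (P[Sig t|G]) ω| ∂P)
      (𝓝[Ioc (0 : ℝ) (T - t)] 0) (𝓝 0) := by
  obtain ⟨ht0, htT⟩ := ht
  have htI : t ∈ Icc (0 : ℝ) T := ⟨ht0, htT.le⟩
  have h0I : (0 : ℝ) ∈ Icc (0 : ℝ) T := ⟨le_refl 0, hT.le⟩
  set C' : ℝ := max C 0 with hC'def
  have hC'0 : 0 ≤ C' := le_max_right _ _
  have hSig_bdd' : ∀ s ∈ Icc (0 : ℝ) T, ∀ ω, |Sig s ω| ≤ C' :=
    fun s hs ω => (hSig_bdd s hs ω).trans (le_max_left _ _)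
  -- measurability of `Sig s` in ω
  have hSig_meas_s : ∀ s : ℝ, Measurable[m0] (fun ω => Sig s ω) := fun s =>
    hSig_meas.comp (measurable_const.prodMk measurable_id)
  -- measurability of `Sig · ω` in the time variable
  have hSig_meas_r : ∀ ω, Measurable (fun r => Sig r ω) := fun ω =>
    hSig_meas.comp (measurable_id.prodMk measurable_const)
  -- `Sig t` is integrable
  have hSig_t_int : Integrable (Sig t) P := by
    refine (integrable_const C').mono' (hSig_meas_s t).aestronglyMeasurable ?_
    exact ae_of_all _ fun ω => by
      rw [Real.norm_eq_abs]; exact hSig_bdd' t htI ω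
  -- uIoc's inside [0,T]
  have huIoc_sub : ∀ a b : ℝ, a ∈ Icc (0 : ℝ) T → b ∈ Icc (0 : ℝ) T →
      Set.uIoc a b ⊆ Icc (0 : ℝ) T := by
    intro a b ha hb r hr
    rw [Set.mem_uIoc] at hr
    rcases hr with hr | hr
    · exact ⟨le_trans ha.1 hr.1.le, le_trans hr.2 hb.2⟩
    · exact ⟨le_trans hb.1 hr.1.le, le_trans hr.2 ha.2⟩
  -- interval integrability of `Sig · ω` on subintervals of [0,T]
  have hII : ∀ ω, ∀ a b : ℝ, a ∈ Icc (0 : ℝ) T → b ∈ Icc (0 : ℝ) T →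
      IntervalIntegrable (fun r => Sig r ω) volume a b := by
    intro ω a b ha hb
    rw [intervalIntegrable_iff]
    refine Measure.integrableOn_of_bounded (M := C') ?_ (hSig_meas_r ω).aestronglyMeasurable ?_
    · exact ne_of_lt (lt_of_le_of_lt (measure_mono (huIoc_sub a b ha hb))
        (by rw [Real.volume_Icc]; exact ENNReal.ofReal_lt_top))
    · exact ae_restrict_of_forall_mem measurableSet_uIoc fun r hr => by
        rw [Real.norm_eq_abs]; exact hSig_bdd' r (huIoc_sub a b ha hb hr) ω
  -- measurability in ω of the running integral
  have hA_meas : ∀ s ∈ Icc (0 : ℝ) T,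
      StronglyMeasurable[m0] (fun ω => ∫ r in (0 : ℝ)..s, Sig r ω) := by
    clear hG G
    intro s hs
    have h1 : (fun ω => ∫ r in (0 : ℝ)..s, Sig r ω)
        = fun ω => ∫ r in Ioc (0 : ℝ) s, Sig r ω := by
      funext ω; exact intervalIntegral.integral_of_le hs.1
    rw [h1]
    exact MeasureTheory.StronglyMeasurable.integral_prod_right
      (f := fun ω r => Sig r ω)
      ((hSig_meas.comp (measurable_snd.prodMk measurable_fst)).stronglyMeasurable)
  -- bound on the running integral
  have hA_bdd : ∀ s ∈ Icc (0 : ℝ) T, ∀ ω, |∫ r in (0 : ℝ)..s, Sig r ω| ≤ C' * T := by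
    intro s hs ω
    have h1 : |∫ r in (0 : ℝ)..s, Sig r ω| ≤ C' * |s - 0| := by
      have := intervalIntegral.norm_integral_le_of_norm_le_const
        (f := fun r => Sig r ω) (a := (0:ℝ)) (b := s) (C := C')
        (fun r hr => by rw [Real.norm_eq_abs]; exact hSig_bdd' r (huIoc_sub 0 s h0I hs hr) ω)
      rwa [Real.norm_eq_abs] at this
    refine h1.trans ?_
    rw [sub_zero, abs_of_nonneg hs.1]
    exact mul_le_mul_of_nonneg_left hs.2 hC'0
  -- integrability of the running integral
  have hA_int : ∀ s ∈ Icc (0 : ℝ) T,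
      Integrable (fun ω => ∫ r in (0 : ℝ)..s, Sig r ω) P := by
    intro s hs
    refine (integrable_const (C' * T)).mono' (hA_meas s hs).aestronglyMeasurable ?_
    exact ae_of_all _ fun ω => by rw [Real.norm_eq_abs]; exact hA_bdd s hs ω
  -- products of L² functions are integrable
  have hmul_int : ∀ f g : Ω → ℝ, MemLp f 2 P → MemLp g 2 P →
      Integrable (fun ω => f ω * g ω) P := by
    intro f g hf hg
    exact memLp_one_iff_integrable.mp (hg.smul (r := 1) hf)
  -- F t-measurability of the running integral at time t
  have hf5meas : StronglyMeasurable[F t] (fun ω => M t ω * N t ω) :=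
    (hM_adapted t htI).mul (hN_adapted t htI)
  have hAt_meas : StronglyMeasurable[F t] (fun ω => ∫ r in (0 : ℝ)..t, Sig r ω) := by
    have heq : (fun ω => ∫ r in (0 : ℝ)..t, Sig r ω)
        = ((fun ω => M t ω * N t ω)
          - fun ω => M t ω * N t ω - ∫ r in (0 : ℝ)..t, Sig r ω) := by
      funext ω; simp only [Pi.sub_apply]; ring
    rw [heq]
    exact hf5meas.sub (hMN_adapted t htI)
  have hAt_int : Integrable (fun ω => ∫ r in (0 : ℝ)..t, Sig r ω) P := hA_int t htI
  have hi5 : Integrable (fun ω => M t ω * N t ω) P :=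
    hmul_int _ _ (hM_sq t htI) (hN_sq t htI)
  -- the comparison process
  set Y : ℝ → Ω → ℝ := fun Δ ω => (1 / Δ) * (∫ r in t..(t + Δ), Sig r ω) - Sig t ω
    with hYdef
  -- KEY STEP 1 : for each admissible Δ, the integrand is a.e. |E[Y Δ | G]|,
  -- hence the integral is bounded by ∫ |Y Δ|.
  have hbound : ∀ Δ ∈ Ioc (0 : ℝ) (T - t),
      (∫ ω, |(1 / Δ) * (P[fun ω' => (M (t + Δ) ω' - M t ω') * (N (t + Δ) ω' - N t ω')|G]) ω
          - (P[Sig t|G]) ω| ∂P) ≤ ∫ ω, |Y Δ ω| ∂P := by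
    intro Δ hΔ
    have hΔ0 : 0 < Δ := hΔ.1
    have hu : t + Δ ∈ Icc (0 : ℝ) T := ⟨by linarith, by linarith [hΔ.2]⟩
    have htu : t ≤ t + Δ := by linarith
    -- the difference of running integrals
    set D : Ω → ℝ := fun ω =>
      (∫ r in (0 : ℝ)..(t + Δ), Sig r ω) - ∫ r in (0 : ℝ)..t, Sig r ω with hDdef
    have hD_int : Integrable D P := (hA_int (t + Δ) hu).sub hAt_int
    have hDfun : ∀ ω, (∫ r in t..(t + Δ), Sig r ω) = D ω := fun ω =>
      (intervalIntegral.integral_interval_sub_left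
        (hII ω 0 (t + Δ) h0I hu) (hII ω 0 t h0I htI)).symm
    -- integrability of the pieces
    have hi1 : Integrable (fun ω => M (t + Δ) ω * N (t + Δ) ω
        - ∫ r in (0 : ℝ)..(t + Δ), Sig r ω) P := hMN_int (t + Δ) hu
    have hi2 : Integrable (fun ω => ∫ r in (0 : ℝ)..(t + Δ), Sig r ω) P := hA_int (t + Δ) hu
    have hNu_int : Integrable (N (t + Δ)) P := (hN_sq _ hu).integrable one_le_two
    have hMu_int : Integrable (M (t + Δ)) P := (hM_sq _ hu).integrable one_le_two
    have hi3 : Integrable (M t * N (t + Δ)) P :=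
      hmul_int _ _ (hM_sq t htI) (hN_sq _ hu)
    have hi4 : Integrable (N t * M (t + Δ)) P :=
      hmul_int _ _ (hN_sq t htI) (hM_sq _ hu)
    -- conditional expectations w.r.t. F t of the pieces
    have c1 : P[fun ω => M (t + Δ) ω * N (t + Δ) ω
        - ∫ r in (0 : ℝ)..(t + Δ), Sig r ω|F t]
        =ᵐ[P] fun ω => M t ω * N t ω - ∫ r in (0 : ℝ)..t, Sig r ω :=
      hMN_mart t htI (t + Δ) hu htu
    have c3 : P[M t * N (t + Δ)|F t] =ᵐ[P] M t * N t :=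
      (condExp_mul_of_stronglyMeasurable_left (hM_adapted t htI) hi3 hNu_int).trans
        (EventuallyEq.mul EventuallyEq.rfl (hN_mart t htI _ hu htu))
    have c4 : P[N t * M (t + Δ)|F t] =ᵐ[P] N t * M t :=
      (condExp_mul_of_stronglyMeasurable_left (hN_adapted t htI) hi4 hMu_int).trans
        (EventuallyEq.mul EventuallyEq.rfl (hM_mart t htI _ hu htu))
    have c5 : P[fun ω => M t ω * N t ω|F t] = fun ω => M t ω * N t ω :=
      condExp_of_stronglyMeasurable (F.le t) hf5meas hi5
    -- decomposition of the product increment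
    have hXdec : (fun ω' => (M (t + Δ) ω' - M t ω') * (N (t + Δ) ω' - N t ω'))
        = (((fun ω => M (t + Δ) ω * N (t + Δ) ω - ∫ r in (0 : ℝ)..(t + Δ), Sig r ω)
            + (fun ω => ∫ r in (0 : ℝ)..(t + Δ), Sig r ω))
          - (M t * N (t + Δ) + N t * M (t + Δ)))
          + (fun ω => M t ω * N t ω) := by
      funext ω
      simp only [Pi.add_apply, Pi.sub_apply, Pi.mul_apply]
      ring
    -- conditional expectation of the product increment w.r.t. F t
    have h1 : P[fun ω' => (M (t + Δ) ω' - M t ω') * (N (t + Δ) ω' - N t ω')|F t]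
        =ᵐ[P] P[D|F t] := by
      have e1 : P[fun ω' => (M (t + Δ) ω' - M t ω') * (N (t + Δ) ω' - N t ω')|F t]
          =ᵐ[P]
          ((P[fun ω => M (t + Δ) ω * N (t + Δ) ω - ∫ r in (0 : ℝ)..(t + Δ), Sig r ω|F t]
            + P[fun ω => ∫ r in (0 : ℝ)..(t + Δ), Sig r ω|F t])
          - (P[M t * N (t + Δ)|F t] + P[N t * M (t + Δ)|F t]))
          + P[fun ω => M t ω * N t ω|F t] := by
        rw [hXdec]
        refine (condExp_add ((hi1.add hi2).sub (hi3.add hi4)) hi5 _).trans ?_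
        refine EventuallyEq.add ?_ EventuallyEq.rfl
        refine (condExp_sub (hi1.add hi2) (hi3.add hi4) _).trans ?_
        exact EventuallyEq.sub (condExp_add hi1 hi2 _) (condExp_add hi3 hi4 _)
      have e2 : P[D|F t]
          =ᵐ[P] P[fun ω => ∫ r in (0 : ℝ)..(t + Δ), Sig r ω|F t]
            - (fun ω => ∫ r in (0 : ℝ)..t, Sig r ω) := by
        refine (condExp_sub hi2 hAt_int _).trans ?_
        rw [condExp_of_stronglyMeasurable (F.le t) hAt_meas hAt_int]
      refine e1.trans ?_
      refine EventuallyEq.trans ?_ e2.symm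
      filter_upwards [c1, c3, c4] with ω h1' h3' h4'
      simp only [Pi.add_apply, Pi.sub_apply, Pi.mul_apply, c5, h1', h3', h4']
      ring
    -- pass to G by the tower property
    have hXG : P[fun ω' => (M (t + Δ) ω' - M t ω') * (N (t + Δ) ω' - N t ω')|G]
        =ᵐ[P] P[D|G] := by
      refine ((condExp_condExp_of_le hG (F.le t)).symm.trans ?_)
      refine (condExp_congr_ae h1).trans ?_
      exact condExp_condExp_of_le hG (F.le t)
    -- conditional expectation of Y Δ
    have hYeq : Y Δ = (1 / Δ) • D - Sig t := by
      funext ω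
      simp only [hYdef, Pi.sub_apply, Pi.smul_apply, smul_eq_mul, hDfun ω]
    have hYG : P[Y Δ|G] =ᵐ[P] fun ω => (1 / Δ) * (P[D|G]) ω - (P[Sig t|G]) ω := by
      rw [hYeq]
      refine (condExp_sub (hD_int.smul (1 / Δ)) hSig_t_int _).trans ?_
      have := condExp_smul (μ := P) (m := G) (1 / Δ : ℝ) D
      filter_upwards [this] with ω hω
      simp only [Pi.sub_apply, Pi.smul_apply, smul_eq_mul] at hω ⊢
      rw [hω]
    -- the integrands agree a.e.
    have hae : (fun ω => |(1 / Δ)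
          * (P[fun ω' => (M (t + Δ) ω' - M t ω') * (N (t + Δ) ω' - N t ω')|G]) ω
          - (P[Sig t|G]) ω|)
        =ᵐ[P] fun ω => |(P[Y Δ|G]) ω| := by
      filter_upwards [hXG, hYG] with ω h1' h2'
      rw [h1', h2']
    calc (∫ ω, |(1 / Δ)
          * (P[fun ω' => (M (t + Δ) ω' - M t ω') * (N (t + Δ) ω' - N t ω')|G]) ω
          - (P[Sig t|G]) ω| ∂P)
        = ∫ ω, |(P[Y Δ|G]) ω| ∂P := integral_congr_ae hae
      _ ≤ ∫ ω, |Y Δ ω| ∂P := integral_abs_condExp_le (Y Δ)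
  -- KEY STEP 2 : ∫ |Y Δ| → 0 by dominated convergence.
  have hlim : Tendsto (fun Δ => ∫ ω, |Y Δ ω| ∂P) (𝓝[Ioc (0 : ℝ) (T - t)] 0) (𝓝 0) := by
    have h := tendsto_integral_filter_of_dominated_convergence
      (μ := P) (l := 𝓝[Ioc (0 : ℝ) (T - t)] (0 : ℝ))
      (F := fun Δ ω => |Y Δ ω|) (f := fun _ => (0 : ℝ))
      (bound := fun _ => 2 * C') ?_ ?_ (integrable_const _) ?_
    · simpa using h
    · -- a.e. strong measurability
      filter_upwards [self_mem_nhdsWithin] with Δ hΔ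
      have hΔ0 : (0 : ℝ) < Δ := hΔ.1
      have hu : t + Δ ∈ Icc (0 : ℝ) T := ⟨by linarith, by linarith [hΔ.2]⟩
      have heq : (fun ω => |Y Δ ω|)
          = fun ω => |(1 / Δ) * ((∫ r in (0 : ℝ)..(t + Δ), Sig r ω)
              - ∫ r in (0 : ℝ)..t, Sig r ω) - Sig t ω| := by
        funext ω
        rw [hYdef]
        congr 2
        rw [intervalIntegral.integral_interval_sub_left
          (hII ω 0 (t + Δ) h0I hu) (hII ω 0 t h0I htI)]
      rw [heq]
      have h5 : StronglyMeasurable[m0] (fun ω =>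
          (1 / Δ) * ((∫ r in (0 : ℝ)..(t + Δ), Sig r ω) - ∫ r in (0 : ℝ)..t, Sig r ω)
            - Sig t ω) :=
        (((hA_meas (t + Δ) hu).sub (hA_meas t htI)).const_mul (1 / Δ)).sub
          (hSig_meas_s t).stronglyMeasurable
      exact h5.norm.aestronglyMeasurable
    · -- the uniform bound
      filter_upwards [self_mem_nhdsWithin] with Δ hΔ
      have hΔ0 : (0 : ℝ) < Δ := hΔ.1
      have hu : t + Δ ∈ Icc (0 : ℝ) T := ⟨by linarith, by linarith [hΔ.2]⟩
      refine ae_of_all _ fun ω => ?_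
      rw [Real.norm_eq_abs, abs_abs]
      have hIb : |∫ r in t..(t + Δ), Sig r ω| ≤ C' * |t + Δ - t| := by
        have := intervalIntegral.norm_integral_le_of_norm_le_const
          (f := fun r => Sig r ω) (a := t) (b := t + Δ) (C := C')
          (fun r hr => by
            rw [Real.norm_eq_abs]; exact hSig_bdd' r (huIoc_sub t (t + Δ) htI hu hr) ω)
        rwa [Real.norm_eq_abs] at this
      have hIb' : |∫ r in t..(t + Δ), Sig r ω| ≤ C' * Δ := by
        simpa [abs_of_pos hΔ0] using hIb
      calc |Y Δ ω| ≤ |(1 / Δ) * (∫ r in t..(t + Δ), Sig r ω)| + |Sig t ω| := by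
            rw [hYdef]; exact abs_sub _ _
        _ ≤ (1 / Δ) * (C' * Δ) + C' := by
            refine add_le_add ?_ (hSig_bdd' t htI ω)
            rw [abs_mul, abs_of_pos (by positivity : (0:ℝ) < 1 / Δ)]
            exact mul_le_mul_of_nonneg_left hIb' (by positivity)
        _ = 2 * C' := by field_simp; ring
    · -- a.e. pointwise convergence
      filter_upwards [hSig_cont] with ω hc
      have hY0 : Tendsto (fun Δ => Y Δ ω) (𝓝[Ioc (0 : ℝ) (T - t)] 0) (𝓝 0) := by
        rw [Metric.tendsto_nhdsWithin_nhds]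
        intro ε hε
        have hct : ContinuousWithinAt (fun s => Sig s ω) (Icc (0 : ℝ) T) t := hc t htI
        rw [Metric.continuousWithinAt_iff] at hct
        obtain ⟨δ, hδ0, hδ⟩ := hct (ε / 2) (by positivity)
        refine ⟨δ, hδ0, ?_⟩
        intro Δ hΔ hdist
        have hΔ0 : (0 : ℝ) < Δ := hΔ.1
        have hu : t + Δ ∈ Icc (0 : ℝ) T := ⟨by linarith, by linarith [hΔ.2]⟩
        rw [Real.dist_eq, sub_zero] at hdist
        have hΔδ : Δ < δ := by rwa [abs_of_pos hΔ0] at hdist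
        rw [Real.dist_eq, sub_zero]
        have hsubb : ∀ r ∈ Set.uIoc t (t + Δ), ‖Sig r ω - Sig t ω‖ ≤ ε / 2 := by
          intro r hr
          rw [Set.uIoc_of_le (by linarith : t ≤ t + Δ)] at hr
          have hrI : r ∈ Icc (0 : ℝ) T := ⟨by linarith [hr.1], by linarith [hr.2, hΔ.2]⟩
          have hrd : dist r t < δ := by
            rw [Real.dist_eq, abs_of_pos (by linarith [hr.1] : (0:ℝ) < r - t)]
            linarith [hr.2]
          rw [Real.norm_eq_abs, ← Real.dist_eq]
          exact (hδ hrI hrd).le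
        have hint_t : IntervalIntegrable (fun r => Sig r ω) volume t (t + Δ) :=
          hII ω t (t + Δ) htI hu
        have hIc : (∫ r in t..(t + Δ), Sig t ω) = Δ * Sig t ω := by
          rw [intervalIntegral.integral_const, smul_eq_mul]
          ring_nf
        have hsplit : (∫ r in t..(t + Δ), (Sig r ω - Sig t ω))
            = (∫ r in t..(t + Δ), Sig r ω) - Δ * Sig t ω := by
          rw [intervalIntegral.integral_sub hint_t intervalIntegrable_const, hIc]
        have hYrw : Y Δ ω = (1 / Δ) * ∫ r in t..(t + Δ), (Sig r ω - Sig t ω) := by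
          rw [hYdef, hsplit]
          field_simp
        have hb : |∫ r in t..(t + Δ), (Sig r ω - Sig t ω)| ≤ (ε / 2) * |t + Δ - t| := by
          have := intervalIntegral.norm_integral_le_of_norm_le_const hsubb
          rwa [Real.norm_eq_abs] at this
        have hb' : |∫ r in t..(t + Δ), (Sig r ω - Sig t ω)| ≤ (ε / 2) * Δ := by
          simpa [abs_of_pos hΔ0] using hb
        calc |Y Δ ω| = |(1 / Δ)| * |∫ r in t..(t + Δ), (Sig r ω - Sig t ω)| := by
              rw [hYrw, abs_mul]
          _ ≤ (1 / Δ) * ((ε / 2) * Δ) := by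
              rw [abs_of_pos (by positivity : (0:ℝ) < 1 / Δ)]
              exact mul_le_mul_of_nonneg_left hb' (by positivity)
          _ = ε / 2 := by field_simp
          _ < ε := by linarith
      simpa using hY0.abs
  -- conclusion by squeezing
  refine squeeze_zero' ?_ ?_ hlim
  · exact Eventually.of_forall fun Δ => integral_nonneg fun ω => abs_nonneg _
  · filter_upwards [self_mem_nhdsWithin] with Δ hΔ
    exact hbound Δ hΔ
end
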